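/- Let f : ℝ⁵ → ℝ, with arguments written f(x, y, t, p, r), be continuously differentiable and satisfy, for all (x, y, t, p, r) ∈ ℝ⁵ and all q ∈ ℝ, the identity f_x + f_t·p + f_p·q + f_r·f − p·f = 0, where subscripts denote partial derivatives. Then there exists a function A : ℝ → ℝ such that f(x, y, t, p, r) = A(y)·e^t for all (x, y, t, p, r) ∈ ℝ⁵. (This is the statement that every hyperbolic equation t_{xy} = f(x, y, t, t_x, t_y) possessing the y-integral I = t_{xx} − (1/2)t_x² coincides, up to a point transformation in y, with the Liouville equation u_{xy} = e^u.) -/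

import Mathlib

lemma aux_exp (h : ℝ → ℝ) (hd : Differentiable ℝ h) (hh : ∀ t, deriv h t = h t) :
    ∀ t, h t = h 0 * Real.exp t := by
  have hk : ∀ t, deriv (fun s => h s * Real.exp (-s)) t = 0 := by
    intro t
    have h1 : HasDerivAt h (h t) t := hh t ▸ (hd t).hasDerivAt
    have h2 : HasDerivAt (fun s => Real.exp (-s)) (Real.exp (-t) * (-1)) t :=
      (Real.hasDerivAt_exp (-t)).comp t ((hasDerivAt_id t).neg)
    have := (h1.mul h2).deriv
    show deriv (h * fun s => Real.exp (-s)) t = 0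
    rw [this]; ring
  have hconst := is_const_of_deriv_eq_zero
    (f := fun s => h s * Real.exp (-s))
    (hd.mul (Real.differentiable_exp.comp differentiable_neg)) hk
  intro t
  have := hconst t 0
  simp at this
  field_simp [Real.exp_neg] at this ⊢
  rw [← this, mul_assoc, ← Real.exp_add]; simp

lemma aux_sq (w : ℝ → ℝ) (hd : Differentiable ℝ w) (hw : ∀ r, deriv w r * w r = 0) :
    ∀ r, w r = w 0 := by
  have hsq : ∀ r, w r ^ 2 = w 0 ^ 2 := by
    have : ∀ r, deriv (fun s => w s ^ 2) r = 0 := by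
      intro r
      have h1 : HasDerivAt w (deriv w r) r := (hd r).hasDerivAt
      show deriv (w ^ 2) r = 0
      rw [(h1.pow 2).deriv]
      norm_num
      exact (mul_eq_zero.mp (hw r)).symm
    exact fun r => is_const_of_deriv_eq_zero (hd.pow 2) this r 0
  by_cases h0 : w 0 = 0
  · intro r
    have := hsq r
    rw [h0] at this
    have : w r ^ 2 = 0 := by simpa using this
    rw [h0]; exact pow_eq_zero_iff (n := 2) (by norm_num) |>.mp this
  · have hne : ∀ r, w r ≠ 0 := fun r hr => h0 (by have := hsq r; rw [hr] at this; nlinarith)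
    have hz : ∀ r, deriv w r = 0 := fun r =>
      (mul_eq_zero.mp (hw r)).resolve_right (hne r)
    exact fun r => is_const_of_deriv_eq_zero hd hz r 0

theorem stmt_15 (f : ℝ → ℝ → ℝ → ℝ → ℝ → ℝ)
    (hf : ContDiff ℝ 1
      (fun v : ℝ × ℝ × ℝ × ℝ × ℝ => f v.1 v.2.1 v.2.2.1 v.2.2.2.1 v.2.2.2.2))
    (hI : ∀ x y t p r : ℝ, ∀ q : ℝ,
      deriv (fun u => f u y t p r) x
        + deriv (fun u => f x y u p r) t * p
        + deriv (fun u => f x y t u r) p * q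
        + deriv (fun u => f x y t p u) r * f x y t p r
        - p * f x y t p r = 0) :
    ∃ A : ℝ → ℝ, ∀ x y t p r : ℝ, f x y t p r = A y * Real.exp t := by
  have hF : Differentiable ℝ
      (fun v : ℝ × ℝ × ℝ × ℝ × ℝ => f v.1 v.2.1 v.2.2.1 v.2.2.2.1 v.2.2.2.2) :=
    hf.differentiable one_ne_zero
  have dX : ∀ y t p r, Differentiable ℝ (fun u => f u y t p r) := fun y t p r =>
    hF.comp (differentiable_id.prodMk (differentiable_const (y, t, p, r)))
  have dT : ∀ x y p r, Differentiable ℝ (fun u => f x y u p r) := fun x y p r =>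
    hF.comp ((differentiable_const x).prodMk ((differentiable_const y).prodMk
      (differentiable_id.prodMk (differentiable_const (p, r)))))
  have dP : ∀ x y t r, Differentiable ℝ (fun u => f x y t u r) := fun x y t r =>
    hF.comp ((differentiable_const x).prodMk ((differentiable_const y).prodMk
      ((differentiable_const t).prodMk (differentiable_id.prodMk (differentiable_const r)))))
  have dR : ∀ x y t p, Differentiable ℝ (fun u => f x y t p u) := fun x y t p =>
    hF.comp ((differentiable_const x).prodMk ((differentiable_const y).prodMk
      ((differentiable_const t).prodMk ((differentiable_const p).prodMk differentiable_id))))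
  -- coefficient of q vanishes
  have hq : ∀ x y t p r, deriv (fun u => f x y t u r) p = 0 := by
    intro x y t p r
    have h0 := hI x y t p r 0
    have h1 := hI x y t p r 1
    linarith
  -- f is constant in p
  have hcp : ∀ x y t p r, f x y t p r = f x y t 0 r := by
    intro x y t p r
    exact is_const_of_deriv_eq_zero (dP x y t r) (fun p => hq x y t p r) p 0
  -- rewritten identity in terms of g := f · · · 0 ·
  have hI' : ∀ x y t r p,
      deriv (fun u => f u y t 0 r) x
        + deriv (fun u => f x y u 0 r) t * p
        + deriv (fun u => f x y t 0 u) r * f x y t 0 r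
        - p * f x y t 0 r = 0 := by
    intro x y t r p
    have := hI x y t p r 0
    have e1 : (fun u => f u y t p r) = (fun u => f u y t 0 r) :=
      funext fun u => hcp u y t p r
    have e2 : (fun u => f x y u p r) = (fun u => f x y u 0 r) :=
      funext fun u => hcp x y u p r
    have e3 : (fun u => f x y t p u) = (fun u => f x y t 0 u) :=
      funext fun u => hcp x y t p u
    rw [e1, e2, e3, hcp x y t p r] at this
    linarith
  -- deriv in t equals g
  have ht : ∀ x y t r, deriv (fun u => f x y u 0 r) t = f x y t 0 r := by
    intro x y t r
    have h0 := hI' x y t r 0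
    have h1 := hI' x y t r 1
    linarith
  -- exponential form in t
  have hexp : ∀ x y t r, f x y t 0 r = f x y 0 0 r * Real.exp t := by
    intro x y t r
    exact aux_exp (fun u => f x y u 0 r) (dT x y 0 r) (fun u => ht x y u r) t
  -- remaining identity at p = 0
  have hx0 : ∀ x y t r,
      deriv (fun u => f u y t 0 r) x
        + deriv (fun u => f x y t 0 u) r * f x y t 0 r = 0 := by
    intro x y t r
    have := hI' x y t r 0
    linarith
  -- rewrite those derivs via exponential form
  have hderivx : ∀ x y t r,
      deriv (fun u => f u y t 0 r) x = deriv (fun u => f u y 0 0 r) x * Real.exp t := by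
    intro x y t r
    have e : (fun u => f u y t 0 r) = (fun u => f u y 0 0 r * Real.exp t) :=
      funext fun u => hexp u y t r
    rw [e, deriv_mul_const (dX y 0 0 r x)]
  have hderivr : ∀ x y t r,
      deriv (fun u => f x y t 0 u) r = deriv (fun u => f x y 0 0 u) r * Real.exp t := by
    intro x y t r
    have e : (fun u => f x y t 0 u) = (fun u => f x y 0 0 u * Real.exp t) :=
      funext fun u => hexp x y t u
    rw [e, deriv_mul_const (dR x y 0 0 r)]
  -- core identity: a + b * exp t = 0 for all t, where a = Dx c, b = Dr c * c
  have hcore : ∀ x y r,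
      deriv (fun u => f u y 0 0 r) x = 0 ∧
      deriv (fun u => f x y 0 0 u) r * f x y 0 0 r = 0 := by
    intro x y r
    have key : ∀ t : ℝ,
        deriv (fun u => f u y 0 0 r) x
          + deriv (fun u => f x y 0 0 u) r * f x y 0 0 r * Real.exp t = 0 := by
      intro t
      have h := hx0 x y t r
      rw [hderivx, hderivr, hexp] at h
      have hne : Real.exp t ≠ 0 := Real.exp_ne_zero t
      have : (deriv (fun u => f u y 0 0 r) x
          + deriv (fun u => f x y 0 0 u) r * f x y 0 0 r * Real.exp t) * Real.exp t = 0 := by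
        nlinarith [h]
      exact (mul_eq_zero.mp this).resolve_right hne
    have k0 := key 0
    have k1 := key (Real.log 2)
    rw [Real.exp_log (by norm_num : (0:ℝ) < 2)] at k1
    rw [Real.exp_zero] at k0
    constructor <;> nlinarith
  -- constant in x
  have hcx : ∀ x y r, f x y 0 0 r = f 0 y 0 0 r := by
    intro x y r
    exact is_const_of_deriv_eq_zero (dX y 0 0 r) (fun x => (hcore x y r).1) x 0
  -- constant in r
  have hcr : ∀ y r, f 0 y 0 0 r = f 0 y 0 0 0 := by
    intro y r
    exact aux_sq (fun u => f 0 y 0 0 u) (dR 0 y 0 0) (fun u => (hcore 0 y u).2) r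
  refine ⟨fun y => f 0 y 0 0 0, fun x y t p r => ?_⟩
  rw [hcp x y t p r, hexp x y t r, hcx x y r, hcr y r]
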